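/- Let k be an algebraically closed field of characteristic 0, let F ∈ k[X] be a squarefree polynomial of degree e ≥ 3, and let γ ∈ k[t] be a nonconstant polynomial. Then the composition F(γ(t)) has at least deg(γ) + 1 distinct roots in k. (The genus-0, integral-point case of Proposition 3.3 of the paper, which is deduced from the Mason–Stothers abc-theorem for function fields: the number of places at which F(γ) vanishes is at least the height of γ minus a constant, and here the constant vanishes since the roots of F are constants and the genus is 0.) -/

import Mathlib

open Polynomial

/-- Counting lemma: for `P = γ - C α`, `Q = γ - C β` with `α ≠ β`, the number of distinct
roots of `P*Q` is at least `deg γ + 1`. -/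
private lemma aux_two_fibers {k : Type*} [Field k] [IsAlgClosed k] [CharZero k]
    [DecidableEq k] (γ : k[X]) (hγ : 0 < γ.natDegree) {α β : k} (hab : α ≠ β) :
    γ.natDegree + 1 ≤ ((γ - C α) * (γ - C β)).roots.toFinset.card := by
  classical
  set n := γ.natDegree with hn
  set P := γ - C α with hP
  set Q := γ - C β with hQ
  have hdP : P.natDegree = n := natDegree_sub_C
  have hdQ : Q.natDegree = n := natDegree_sub_C
  have hP0 : P ≠ 0 := fun h => by rw [h, natDegree_zero] at hdP; omega
  have hQ0 : Q ≠ 0 := fun h => by rw [h, natDegree_zero] at hdQ; omega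
  have hPQ0 : P * Q ≠ 0 := mul_ne_zero hP0 hQ0
  set d := derivative γ with hd
  have hd0 : d ≠ 0 := by
    intro h
    have := natDegree_eq_zero_of_derivative_eq_zero h
    omega
  have hdd : d.natDegree = n - 1 :=
    natDegree_eq_of_degree_eq_some (degree_derivative_eq γ hγ)
  have hdP' : derivative P = d := by rw [hP]; simp [hd]
  have hdQ' : derivative Q = d := by rw [hQ]; simp [hd]
  have hnotboth : ∀ r : k, ¬(P.IsRoot r ∧ Q.IsRoot r) := by
    rintro r ⟨h1, h2⟩
    rw [hP, IsRoot, eval_sub, eval_C, sub_eq_zero] at h1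
    rw [hQ, IsRoot, eval_sub, eval_C, sub_eq_zero] at h2
    exact hab (h1.symm.trans h2)
  set S := (P * Q).roots.toFinset with hS
  set m : k → ℕ := fun r => (P * Q).rootMultiplicity r with hm
  -- sum of multiplicities is 2n
  have hcard : Multiset.card (P * Q).roots = 2 * n := by
    rw [splits_iff_card_roots.mp (IsAlgClosed.splits _), natDegree_mul hP0 hQ0,
      hdP, hdQ]
    ring
  have hsum : ∑ r ∈ S, m r = 2 * n := by
    rw [← hcard, hS]
    simp_rw [hm, ← count_roots]
    exact Multiset.toFinset_sum_count_eq _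
  have hm1 : ∀ r ∈ S, 1 ≤ m r := by
    intro r hr
    rw [hS, Multiset.mem_toFinset, mem_roots hPQ0] at hr
    exact (rootMultiplicity_pos hPQ0).mpr hr
  -- the product of (X - C r)^(m r - 1) divides d
  have hdvd : (∏ r ∈ S, (X - C r) ^ (m r - 1)) ∣ d := by
    apply Finset.prod_dvd_of_coprime
    · intro a _ b _ hne
      exact (isCoprime_X_sub_C_of_isUnit_sub (sub_ne_zero_of_ne hne).isUnit).pow
    · intro r hr
      rw [hS, Multiset.mem_toFinset, mem_roots hPQ0, IsRoot, eval_mul,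
        mul_eq_zero] at hr
      have hmul : m r = P.rootMultiplicity r + Q.rootMultiplicity r := by
        rw [hm]; exact rootMultiplicity_mul hPQ0
      rcases hr with h | h
      · have hQr : Q.rootMultiplicity r = 0 :=
          rootMultiplicity_eq_zero (fun h2 => hnotboth r ⟨h, h2⟩)
        have : (X - C r) ^ (m r - 1) ∣ derivative P := by
          rw [hmul, hQr, Nat.add_zero]
          exact pow_sub_one_dvd_derivative_of_pow_dvd (P.pow_rootMultiplicity_dvd r)
        rwa [hdP'] at this
      · have hPr : P.rootMultiplicity r = 0 :=
          rootMultiplicity_eq_zero (fun h2 => hnotboth r ⟨h2, h⟩)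
        have : (X - C r) ^ (m r - 1) ∣ derivative Q := by
          rw [hmul, hPr, Nat.zero_add]
          exact pow_sub_one_dvd_derivative_of_pow_dvd (Q.pow_rootMultiplicity_dvd r)
        rwa [hdQ'] at this
  -- degree bound
  have hdeg : (∏ r ∈ S, (X - C r) ^ (m r - 1)).natDegree = ∑ r ∈ S, (m r - 1) := by
    rw [natDegree_prod _ _ (fun r _ => pow_ne_zero _ (X_sub_C_ne_zero r))]
    exact Finset.sum_congr rfl fun r _ => by
      rw [natDegree_pow, natDegree_X_sub_C, mul_one]
  have hle : ∑ r ∈ S, (m r - 1) ≤ n - 1 := by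
    rw [← hdeg, ← hdd]
    exact natDegree_le_of_dvd hdvd hd0
  have hsplit : ∑ r ∈ S, (m r - 1) + S.card = 2 * n := by
    have h2 : ∑ r ∈ S, ((m r - 1) + 1) = ∑ r ∈ S, m r :=
      Finset.sum_congr rfl fun r hr => by rw [Nat.sub_add_cancel (hm1 r hr)]
    rw [Finset.sum_add_distrib, Finset.sum_const, smul_eq_mul, mul_one] at h2
    rw [h2, hsum]
  omega

/-- Genus-0, integral-point case of Proposition 3.3 (via Mason–Stothers): if `F` is
squarefree of degree `e ≥ 3` over an algebraically closed field of characteristic 0 and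
`γ` is a nonconstant polynomial, then `F ∘ γ` has at least `deg γ + 1` distinct roots. -/
theorem stmt_9 {k : Type*} [Field k] [IsAlgClosed k] [CharZero k]
    (F γ : Polynomial k) (hF : Squarefree F) (he : 3 ≤ F.natDegree)
    (hγ : 0 < γ.natDegree) :
    γ.natDegree + 1 ≤ {x : k | (F.comp γ).eval x = 0}.ncard := by
  classical
  have hF0 : F ≠ 0 := hF.ne_zero
  -- F has at least two distinct roots
  have hnodup : F.roots.Nodup := nodup_roots (PerfectField.separable_iff_squarefree.mpr hF)
  have hcardF : F.roots.toFinset.card = F.natDegree := by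
    rw [Multiset.toFinset_card_of_nodup hnodup,
      splits_iff_card_roots.mp (IsAlgClosed.splits F)]
  obtain ⟨α, hα, β, hβ, hab⟩ := Finset.one_lt_card.mp (by omega :
      1 < F.roots.toFinset.card)
  rw [Multiset.mem_toFinset, mem_roots hF0] at hα hβ
  have hne : ∀ c : k, γ - C c ≠ 0 := fun c h => by
    have h2 : (γ - C c).natDegree = γ.natDegree := natDegree_sub_C
    rw [h, natDegree_zero] at h2
    omega
  -- the composition is nonzero
  have hcomp0 : F.comp γ ≠ 0 := fun h => by
    have := natDegree_comp (p := F) (q := γ)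
    rw [h, natDegree_zero] at this
    rcases Nat.mul_eq_zero.mp this.symm with h' | h' <;> omega
  have hset : {x : k | (F.comp γ).eval x = 0} = ↑((F.comp γ).roots.toFinset) := by
    ext x
    simp [Multiset.mem_toFinset, mem_roots hcomp0, IsRoot]
  rw [hset, Set.ncard_coe_finset]
  refine le_trans (aux_two_fibers γ hγ hab) (Finset.card_le_card ?_)
  intro r hr
  rw [Multiset.mem_toFinset, mem_roots (mul_ne_zero (hne α) (hne β)),
    IsRoot, eval_mul, mul_eq_zero] at hr
  rw [Multiset.mem_toFinset, mem_roots hcomp0, IsRoot, eval_comp]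
  rcases hr with h | h
  · rw [eval_sub, eval_C, sub_eq_zero] at h
    rw [h]
    exact hα
  · rw [eval_sub, eval_C, sub_eq_zero] at h
    rw [h]
    exact hβ
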